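/- Let n ≥ 1 and let G be a strongly connected directed simple graph on Fin n. Then for every k, l : Fin n and every α : ℂ, there exists A ∈ Θ_G such that the determinant of the (n−1)×(n−1) matrix (A − α • (1 : Matrix (Fin n) (Fin n) ℂ)).submatrix (Fin.succAbove k) (Fin.succAbove l), obtained from A by subtracting α from every diagonal entry and deleting row k and column l, is nonzero. -/
import Mathlib


open Matrix

variable {V : Type*}

/-- The parameter space `Θ_G` of a directed simple graph given by the edge
relation `E` (where `E j i` means there is an edge `j → i`): matrices whose
off-diagonal entry `(i,j)` vanishes unless `j → i` is an edge. -/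
def Theta (E : V → V → Prop) : Set (Matrix V V ℂ) :=
  {A | ∀ i j, i ≠ j → ¬ E j i → A i j = 0}

/-- The embedding `Fin (n-1) → Fin n` skipping the index `k`
(deleting row/column `k`). -/
def delEmb {n : ℕ} (k : Fin n) (i : Fin (n - 1)) : Fin n :=
  if i.1 < k.1 then ⟨i.1, by have := i.isLt; have := k.isLt; omega⟩
  else ⟨i.1 + 1, by have := i.isLt; omega⟩

private def nSteps {V : Type*} (E : V → V → Prop) : ℕ → V → V → Prop
  | 0 => Eq
  | (m + 1) => fun a c => ∃ b, E a b ∧ nSteps E m b c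

private lemma exists_nSteps {V : Type*} {E : V → V → Prop} {a b : V}
    (h : Relation.ReflTransGen E a b) : ∃ m, nSteps E m a b := by
  induction h using Relation.ReflTransGen.head_induction_on with
  | refl => exact ⟨0, rfl⟩
  | head hab _ ih =>
    obtain ⟨m, hm⟩ := ih
    exact ⟨m + 1, _, hab, hm⟩

private lemma exists_good_perm {V : Type*} [DecidableEq V] {E : V → V → Prop}
    (hirr : ∀ v, ¬ E v v) {l : V} (hsc : ∀ u, Relation.ReflTransGen E u l)
    (k : V) :
    ∃ π : Equiv.Perm V, π k = l ∧ ∀ i, i ≠ k → π i ≠ i → E (π i) i := by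
  classical
  set d : V → ℕ := fun u => Nat.find (exists_nSteps (hsc u)) with hd
  have hds : ∀ u, nSteps E (d u) u l := fun u => Nat.find_spec (exists_nSteps (hsc u))
  suffices h : ∀ N k, d k ≤ N → ∃ π : Equiv.Perm V, π k = l ∧
      (∀ i, i ≠ k → π i ≠ i → E (π i) i) ∧ (∀ i, π i ≠ i → d i ≤ d k) by
    obtain ⟨π, h1, h2, _⟩ := h (d k) k le_rfl
    exact ⟨π, h1, h2⟩
  intro N
  induction N with
  | zero =>
    intro k hk
    have hk0 : d k = 0 := Nat.le_zero.mp hk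
    have : nSteps E 0 k l := hk0 ▸ hds k
    refine ⟨1, this, ?_, ?_⟩ <;> simp
  | succ N ih =>
    intro k hk
    rcases Nat.eq_zero_or_pos (d k) with hk0 | hkpos
    · have : nSteps E 0 k l := hk0 ▸ hds k
      refine ⟨1, this, ?_, ?_⟩ <;> simp
    · obtain ⟨s, hs⟩ : ∃ s, d k = s + 1 := ⟨d k - 1, by omega⟩
      have hstep : nSteps E (s + 1) k l := hs ▸ hds k
      obtain ⟨v, hEv, hv⟩ := hstep
      have hdv : d v ≤ s := Nat.find_le hv
      obtain ⟨π, hπl, hπE, hπd⟩ := ih v (by omega)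
      have hkv : k ≠ v := by rintro rfl; exact hirr k hEv
      have hπk : π k = k := by
        by_contra h
        have := hπd k h
        omega
      refine ⟨π * Equiv.swap k v, ?_, ?_, ?_⟩
      · rw [Equiv.Perm.mul_apply, Equiv.swap_apply_left, hπl]
      · intro i hik hi
        rcases eq_or_ne i v with rfl | hiv
        · rw [Equiv.Perm.mul_apply, Equiv.swap_apply_right, hπk]
          exact hEv
        · rw [Equiv.Perm.mul_apply, Equiv.swap_apply_of_ne_of_ne hik hiv] at hi ⊢
          exact hπE i hiv hi
      · intro i hi
        rcases eq_or_ne i k with rfl | hik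
        · exact le_rfl
        rcases eq_or_ne i v with rfl | hiv
        · omega
        · rw [Equiv.Perm.mul_apply, Equiv.swap_apply_of_ne_of_ne hik hiv] at hi
          have := hπd i hi
          omega

private lemma delEmb_eq_succAbove {m : ℕ} (p : Fin (m + 1)) (i : Fin (m + 1 - 1)) :
    delEmb p i = p.succAbove i := by
  rw [Fin.succAbove]
  unfold delEmb
  by_cases h : (i : ℕ) < (p : ℕ)
  · rw [if_pos h, if_pos (by simpa [Fin.lt_def] using h)]
    rfl
  · rw [if_neg h, if_neg (by simpa [Fin.lt_def] using h)]
    rfl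

/-- For a strongly connected directed simple graph on
`Fin n`, any `k, l` and any `α : ℂ`, there is `A ∈ Θ_G` such that the matrix
`A_{k,l,α}`, obtained from `A` by subtracting `α` from every diagonal entry
and deleting row `k` and column `l`, has nonzero determinant. -/
theorem exists_param_det_ne_zero (n : ℕ) (hn : 1 ≤ n)
    (E : Fin n → Fin n → Prop) (hirr : ∀ v, ¬ E v v)
    (hsc : ∀ u v : Fin n, Relation.ReflTransGen E u v)
    (k l : Fin n) (α : ℂ) :
    ∃ A ∈ Theta E,
      ((A - α • (1 : Matrix (Fin n) (Fin n) ℂ)).submatrix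
        (delEmb k) (delEmb l)).det ≠ 0 := by
  classical
  obtain ⟨m, rfl⟩ : ∃ m, n = m + 1 := ⟨n - 1, by omega⟩
  obtain ⟨π, hπk, hπE⟩ := exists_good_perm hirr (fun u => hsc u l) k
  set B : Matrix (Fin (m + 1)) (Fin (m + 1)) ℂ :=
    Matrix.of (fun i j => if i ≠ k ∧ j = π i then 1 else 0) with hB
  refine ⟨α • 1 + B, ?_, ?_⟩
  · intro i j hij hE
    have hB0 : B i j = 0 := by
      rw [hB, Matrix.of_apply, if_neg]
      rintro ⟨hik, rfl⟩
      exact hE (hπE i hik (Ne.symm hij))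
    simp [Matrix.add_apply, Matrix.smul_apply, Matrix.one_apply_ne hij, hB0]
  · have hsub : α • (1 : Matrix (Fin (m + 1)) (Fin (m + 1)) ℂ) + B - α • 1 = B :=
      add_sub_cancel_left _ _
    rw [hsub]
    -- the permutation induced on the deleted index sets
    have hcong : ∀ x : Fin (m + 1), x ≠ k ↔ π x ≠ l := by
      intro x
      constructor
      · intro h he
        exact h (π.injective (he.trans hπk.symm))
      · intro h he
        exact h (he ▸ hπk)
    let τ : Equiv.Perm (Fin (m + 1 - 1)) :=
      (finSuccAboveEquiv k).trans ((π.subtypeEquiv (fun x => not_congr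
        ⟨fun h => h ▸ hπk, fun h => π.injective (h.trans hπk.symm)⟩)).trans
        (finSuccAboveEquiv l).symm)
    have hM : B.submatrix (delEmb k) (delEmb l) =
        (1 : Matrix (Fin (m + 1 - 1)) (Fin (m + 1 - 1)) ℂ).submatrix τ id := by
      ext a b
      rw [Matrix.submatrix_apply, Matrix.submatrix_apply, id_eq, Matrix.one_apply,
        delEmb_eq_succAbove, delEmb_eq_succAbove, hB, Matrix.of_apply]
      have h1 : k.succAbove a ≠ k := Fin.succAbove_ne k a
      have h2 : (l.succAbove b = π (k.succAbove a)) ↔ τ a = b := by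
        simp only [τ, Equiv.trans_apply, finSuccAboveEquiv_apply, Equiv.subtypeEquiv_apply,
          Equiv.symm_apply_eq, finSuccAboveEquiv_apply, Subtype.ext_iff]
        exact ⟨fun h => h.symm, fun h => h.symm⟩
      by_cases h : τ a = b
      · rw [if_pos ⟨h1, h2.mpr h⟩, if_pos h]
      · rw [if_neg (fun hc => h (h2.mp hc.2)), if_neg h]
    rw [hM, Matrix.det_permute, Matrix.det_one, mul_one]
    rcases Int.units_eq_one_or (Equiv.Perm.sign τ) with h | h <;> simp [h]
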